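/- For every integer n ≥ 1, the number of rooted trees on the vertex set Fin n — that is, the number of pairs (T, r) where T is a tree (a connected simple graph with no cycles) on the vertex set Fin n and r ∈ Fin n is a distinguished vertex (the root) — equals n^{n−1}. -/

import Mathlib

open Function

namespace Cayley

variable {n : ℕ}

/-- `p` is a parent function with root `r`. -/
def Cond (p : Fin n → Fin n) (r : Fin n) : Prop :=
  p r = r ∧ ∀ v, ∃ k, p^[k] v = r

/-- The graph of a parent function. -/
def treeOf (p : Fin n → Fin n) (r : Fin n) : SimpleGraph (Fin n) :=
  SimpleGraph.fromRel (fun a b => a ≠ r ∧ p a = b)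

variable {p : Fin n → Fin n} {r : Fin n}

lemma Cond.iterate_ge (hp : Cond p r) {v : Fin n} {k : ℕ} (h : p^[k] v = r) {m : ℕ}
    (hm : k ≤ m) : p^[m] v = r := by
  obtain ⟨j, rfl⟩ := Nat.exists_eq_add_of_le hm
  rw [add_comm, Function.iterate_add_apply, h]
  exact Function.iterate_fixed hp.1 j

lemma Cond.eq_root_of_periodic (hp : Cond p r) {v : Fin n} {m : ℕ} (hm : 0 < m)
    (h : p^[m] v = v) : v = r := by
  obtain ⟨k, hk⟩ := hp.2 v
  have h2 : ∀ t, p^[m * t] v = v := by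
    intro t
    induction t with
    | zero => simp
    | succ t ih => rw [Nat.mul_succ, Function.iterate_add_apply, h, ih]
  have h3 := h2 (k + 1)
  have h4 : k ≤ m * (k + 1) := by nlinarith
  rw [hp.iterate_ge hk h4] at h3
  exact h3.symm

lemma Cond.p_ne (hp : Cond p r) {v : Fin n} (hv : v ≠ r) : p v ≠ v := by
  intro h
  exact hv (hp.eq_root_of_periodic one_pos h)

lemma adj_treeOf (hp : Cond p r) {a b : Fin n} :
    (treeOf p r).Adj a b ↔ (a ≠ r ∧ p a = b) ∨ (b ≠ r ∧ p b = a) := by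
  constructor
  · rintro ⟨-, h⟩; exact h
  · intro h
    refine ⟨?_, h⟩
    rcases h with ⟨h1, h2⟩ | ⟨h1, h2⟩
    · rw [← h2]; exact (hp.p_ne h1).symm
    · rw [← h2]; exact hp.p_ne h1

noncomputable def depth (hp : Cond p r) (v : Fin n) : ℕ :=
  Nat.find (p := fun k => p^[k] v = r) (hp.2 v)

lemma depth_spec (hp : Cond p r) (v : Fin n) : p^[depth hp v] v = r :=
  Nat.find_spec (hp.2 v)

lemma depth_eq_zero (hp : Cond p r) {v : Fin n} : depth hp v = 0 ↔ v = r := by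
  constructor
  · intro h
    have := depth_spec hp v
    rwa [h] at this
  · intro h
    subst h
    simp [depth]

lemma depth_parent (hp : Cond p r) {v : Fin n} (hv : v ≠ r) :
    depth hp (p v) + 1 = depth hp v := by
  have h0 : depth hp v ≠ 0 := fun h => hv ((depth_eq_zero hp).mp h)
  obtain ⟨d, hd⟩ := Nat.exists_eq_succ_of_ne_zero h0
  have h1 : p^[d] (p v) = r := by
    rw [← Function.iterate_succ_apply]
    rw [← hd]
    exact depth_spec hp v
  have h2 : depth hp (p v) ≤ d := Nat.find_le h1

  have h3 : ∀ j < d, p^[j] (p v) ≠ r := by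
    intro j hj hjr
    have : p^[j + 1] v = r := by rwa [Function.iterate_succ_apply]
    have : depth hp v ≤ j + 1 := Nat.find_le this
    omega
  have h4 : d ≤ depth hp (p v) := by
    by_contra hlt
    exact h3 _ (by omega) (depth_spec hp (p v))
  omega

lemma reachable_root (hp : Cond p r) (v : Fin n) : (treeOf p r).Reachable v r := by
  generalize hd : depth hp v = d
  induction d generalizing v with
  | zero => rw [depth_eq_zero hp] at hd; exact hd ▸ SimpleGraph.Reachable.refl _
  | succ d ih =>
    have hv : v ≠ r := by
      intro h; rw [← depth_eq_zero hp] at h; omega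
    have hadj : (treeOf p r).Adj v (p v) := (adj_treeOf hp).mpr (Or.inl ⟨hv, rfl⟩)
    have : depth hp (p v) = d := by have := depth_parent hp hv; omega
    exact hadj.reachable.trans (ih _ this)

lemma connected_treeOf (hp : Cond p r) : (treeOf p r).Connected := by
  have : Nonempty (Fin n) := ⟨r⟩
  refine SimpleGraph.Connected.mk fun a b => ?_
  exact (reachable_root hp a).trans (reachable_root hp b).symm

end Cayley

namespace Cayley

variable {n : ℕ} {p : Fin n → Fin n} {r : Fin n}

/-- `S v` = set of descendants of `v`. Invariant along all edges except `{v, p v}`. -/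
lemma S_invariant (hp : Cond p r) {v : Fin n} (hv : v ≠ r) {a b : Fin n}
    (hab : (treeOf p r).Adj a b) (hne : s(a, b) ≠ s(v, p v)) :
    (∃ k, p^[k] a = v) ↔ (∃ k, p^[k] b = v) := by
  -- wlog: b = p a with a ≠ r
  suffices H : ∀ a b : Fin n, a ≠ r → p a = b → s(a, b) ≠ s(v, p v) →
      ((∃ k, p^[k] a = v) ↔ (∃ k, p^[k] b = v)) by
    rcases (adj_treeOf hp).mp hab with ⟨h1, h2⟩ | ⟨h1, h2⟩
    · exact H a b h1 h2 hne
    · exact (H b a h1 h2 (by rw [Sym2.eq_swap] at hne; exact hne)).symm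
  intro a b ha hb hne
  have hav : a ≠ v := by
    intro h; subst h; subst hb; exact hne rfl
  constructor
  · rintro ⟨k, hk⟩
    rcases k with _ | k
    · exact absurd hk hav
    · exact ⟨k, by rwa [Function.iterate_succ_apply, hb] at hk⟩
  · rintro ⟨k, hk⟩
    exact ⟨k + 1, by rwa [Function.iterate_succ_apply, hb]⟩

lemma isBridge_treeOf (hp : Cond p r) {v : Fin n} (hv : v ≠ r) :
    (treeOf p r).IsBridge s(v, p v) := by
  rw [SimpleGraph.isBridge_iff]
  rintro ⟨w⟩
  have key : ∀ {x y : Fin n} (w : ((treeOf p r) \ SimpleGraph.fromEdgeSet {s(v, p v)}).Walk x y),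
      ((∃ k, p^[k] x = v) ↔ (∃ k, p^[k] y = v)) := by
    intro x y w
    induction w with
    | nil => rfl
    | cons h w ih =>
      rcases h with ⟨hadj, hne⟩
      refine (S_invariant hp hv hadj ?_).trans ih
      simp only [SimpleGraph.fromEdgeSet_adj, Set.mem_singleton_iff] at hne
      intro hc
      exact hne ⟨hc, hadj.ne⟩
  have h1 : ∃ k, p^[k] v = v := ⟨0, rfl⟩
  have h2 : ∃ k, p^[k] (p v) = v := (key w).mp h1
  obtain ⟨k, hk⟩ := h2
  have : p^[k + 1] v = v := by rwa [Function.iterate_succ_apply]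
  exact hv (hp.eq_root_of_periodic (Nat.succ_pos k) this)

lemma isTree_treeOf (hp : Cond p r) : (treeOf p r).IsTree := by
  refine ⟨connected_treeOf hp, ?_⟩
  rw [SimpleGraph.isAcyclic_iff_forall_adj_isBridge]
  intro a b hab
  rcases (adj_treeOf hp).mp hab with ⟨h1, h2⟩ | ⟨h1, h2⟩
  · rw [← h2]; exact isBridge_treeOf hp h1
  · rw [← h2, Sym2.eq_swap]; exact isBridge_treeOf hp h1

end Cayley

namespace Cayley

variable {n : ℕ} {p : Fin n → Fin n} {r : Fin n}

lemma exists_special_path (hp : Cond p r) (v : Fin n) :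
    ∃ w : (treeOf p r).Walk v r, w.IsPath ∧ w.length = depth hp v ∧
      (∀ u ∈ w.support, depth hp u ≤ depth hp v) ∧ (v ≠ r → w.getVert 1 = p v) := by
  generalize hd : depth hp v = d
  induction d generalizing v with
  | zero =>
    rw [depth_eq_zero hp] at hd
    subst hd
    refine ⟨SimpleGraph.Walk.nil, by simp, ?_, ?_, by simp⟩
    · simp [(depth_eq_zero hp).mpr rfl]
    · intro u hu
      simp at hu
      exact Nat.le_of_eq ((depth_eq_zero hp).mpr hu)
  | succ d ih =>
    have hv : v ≠ r := by
      intro h; rw [← depth_eq_zero hp] at h; omega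
    have hdp : depth hp (p v) = d := by have := depth_parent hp hv; omega
    obtain ⟨w', hw1, hw2, hw3, _⟩ := ih (p v) hdp
    have hadj : (treeOf p r).Adj v (p v) := (adj_treeOf hp).mpr (Or.inl ⟨hv, rfl⟩)
    refine ⟨SimpleGraph.Walk.cons hadj w', ?_, ?_, ?_, ?_⟩
    · rw [SimpleGraph.Walk.cons_isPath_iff]
      refine ⟨hw1, fun hmem => ?_⟩
      have := hw3 v hmem
      omega
    · simp [hw2, hdp]
    · intro u hu
      rw [SimpleGraph.Walk.support_cons, List.mem_cons] at hu
      rcases hu with rfl | hu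
      · omega
      · have := hw3 u hu; omega
    · intro _
      exact SimpleGraph.Walk.getVert_zero w'

variable {T : SimpleGraph (Fin n)}

noncomputable def thePath (hT : T.IsTree) (a b : Fin n) : T.Walk a b :=
  (hT.existsUnique_path a b).choose

lemma thePath_isPath (hT : T.IsTree) (a b : Fin n) : (thePath hT a b).IsPath :=
  (hT.existsUnique_path a b).choose_spec.1

lemma thePath_unique (hT : T.IsTree) {a b : Fin n} {w : T.Walk a b} (hw : w.IsPath) :
    w = thePath hT a b :=
  (hT.existsUnique_path a b).choose_spec.2 w hw

/-- The parent function of a rooted tree. -/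
noncomputable def par (hT : T.IsTree) (r v : Fin n) : Fin n :=
  if v = r then r else (thePath hT v r).getVert 1

lemma par_root (hT : T.IsTree) : par hT r r = r := if_pos rfl

lemma par_of_ne (hT : T.IsTree) {v : Fin n} (hv : v ≠ r) :
    par hT r v = (thePath hT v r).getVert 1 := if_neg hv

lemma adj_par (hT : T.IsTree) {v : Fin n} (hv : v ≠ r) : T.Adj v (par hT r v) := by
  rw [par_of_ne hT hv]
  have hlen : 0 < (thePath hT v r).length := by
    rcases Nat.eq_zero_or_pos (thePath hT v r).length with h | h
    · exact absurd (SimpleGraph.Walk.eq_of_length_eq_zero h) hv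
    · exact h
  have := (thePath hT v r).adj_getVert_succ hlen
  rwa [SimpleGraph.Walk.getVert_zero] at this

lemma thePath_par (hT : T.IsTree) {v : Fin n} (hv : v ≠ r) :
    (thePath hT (par hT r v) r).length + 1 = (thePath hT v r).length := by
  have hnil : ¬(thePath hT v r).Nil := SimpleGraph.Walk.not_nil_of_ne hv
  have htail : ((thePath hT v r).tail).IsPath := (thePath_isPath hT v r).tail
  have h1 : (thePath hT v r).tail.copy (par_of_ne hT hv).symm rfl = thePath hT (par hT r v) r := by
    apply thePath_unique
    simpa using htail
  have := congrArg SimpleGraph.Walk.length h1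
  rw [SimpleGraph.Walk.length_copy] at this
  rw [← this]
  exact SimpleGraph.Walk.length_tail_add_one hnil

lemma cond_par (hT : T.IsTree) (r : Fin n) : Cond (par hT r) r := by
  refine ⟨par_root hT, fun v => ?_⟩
  generalize hd : (thePath hT v r).length = d
  induction d using Nat.strong_induction_on generalizing v with
  | _ d ih =>
    by_cases hv : v = r
    · exact ⟨0, hv⟩
    · have hlt := thePath_par hT hv
      obtain ⟨k, hk⟩ := ih (thePath hT (par hT r v) r).length (by omega) (par hT r v) rfl
      exact ⟨k + 1, by rw [Function.iterate_succ_apply, hk]⟩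

end Cayley

namespace Cayley

variable {n : ℕ} {p : Fin n → Fin n} {r : Fin n} {T : SimpleGraph (Fin n)}

lemma par_treeOf (hp : Cond p r) : par (isTree_treeOf hp) r = p := by
  funext v
  by_cases hv : v = r
  · rw [hv, par_root, hp.1]
  · rw [par_of_ne _ hv]
    obtain ⟨w, hw1, _, _, hw4⟩ := exists_special_path hp v
    rw [← thePath_unique (isTree_treeOf hp) hw1]
    exact hw4 hv

lemma treeOf_par (hT : T.IsTree) (r : Fin n) : treeOf (par hT r) r = T := by
  classical
  have hG : (treeOf (par hT r) r).IsTree := isTree_treeOf (cond_par hT r)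
  have hle : treeOf (par hT r) r ≤ T := by
    intro a b hab
    rcases (adj_treeOf (cond_par hT r)).mp hab with ⟨h1, h2⟩ | ⟨h1, h2⟩
    · rw [← h2]; exact adj_par hT h1
    · rw [← h2]; exact (adj_par hT h1).symm
  have h1 := hG.card_edgeFinset
  have h2 := hT.card_edgeFinset
  have hsub : (treeOf (par hT r) r).edgeFinset ⊆ T.edgeFinset :=
    SimpleGraph.edgeFinset_mono hle
  have := Finset.eq_of_subset_of_card_le hsub (by omega)
  exact SimpleGraph.edgeFinset_inj.mp this

/-- Rooted trees correspond to parent functions. -/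
noncomputable def rootedTreeEquiv (n : ℕ) :
    {q : (Fin n → Fin n) × Fin n // Cond q.1 q.2} ≃
      {t : SimpleGraph (Fin n) × Fin n // t.1.IsTree} where
  toFun q := ⟨(treeOf q.1.1 q.1.2, q.1.2), isTree_treeOf q.2⟩
  invFun t := ⟨(par t.2 t.1.2, t.1.2), cond_par t.2 t.1.2⟩
  left_inv := by
    rintro ⟨⟨p, r⟩, hp⟩
    simp only [Subtype.mk.injEq, Prod.mk.injEq]
    exact ⟨par_treeOf hp, trivial⟩
  right_inv := by
    rintro ⟨⟨T, r⟩, hT⟩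
    simp only [Subtype.mk.injEq, Prod.mk.injEq]
    exact ⟨treeOf_par hT r, trivial⟩

end Cayley

namespace Cayley

variable {n : ℕ}


-- iterate multiples helper
lemma iterate_mul_fixed {α : Type*} {f : α → α} {x : α} {k : ℕ} (h : f^[k] x = x) (t : ℕ) :
    f^[k * t] x = x := by
  induction t with
  | zero => simp
  | succ t ih => rw [Nat.mul_succ, Function.iterate_add_apply, h, ih]

/-- Periodic points of `f`. -/
noncomputable def perSet (f : Fin n → Fin n) : Finset (Fin n) := by
  classical exact Finset.univ.filter (fun x => ∃ k, 0 < k ∧ f^[k] x = x)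

lemma mem_perSet {f : Fin n → Fin n} {x : Fin n} :
    x ∈ perSet f ↔ ∃ k, 0 < k ∧ f^[k] x = x := by
  classical simp [perSet]

lemma perSet_mapsTo {f : Fin n → Fin n} {x : Fin n} (hx : x ∈ perSet f) : f x ∈ perSet f := by
  rw [mem_perSet] at hx ⊢
  obtain ⟨k, hk, hkx⟩ := hx
  exact ⟨k, hk, by rw [← Function.iterate_succ_apply, Function.iterate_succ_apply', hkx]⟩

lemma perSet_injOn {f : Fin n → Fin n} {a b : Fin n} (ha : a ∈ perSet f) (hb : b ∈ perSet f)
    (hab : f a = f b) : a = b := by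
  rw [mem_perSet] at ha hb
  obtain ⟨k, hk, hka⟩ := ha
  obtain ⟨l, hl, hlb⟩ := hb
  have h1 : f^[k * l] a = a := iterate_mul_fixed hka l
  have h2 : f^[k * l] b = b := by rw [mul_comm]; exact iterate_mul_fixed hlb k
  have hkl : 0 < k * l := Nat.mul_pos hk hl
  have ha' : f^[k * l - 1] (f a) = a := by
    rw [← Function.iterate_succ_apply, Nat.succ_eq_add_one, Nat.sub_add_cancel hkl, h1]
  have hb' : f^[k * l - 1] (f b) = b := by
    rw [← Function.iterate_succ_apply, Nat.succ_eq_add_one, Nat.sub_add_cancel hkl, h2]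
  rw [← ha', ← hb', hab]

lemma exists_iterate_mem_perSet (f : Fin n → Fin n) (x : Fin n) :
    ∃ m, f^[m] x ∈ perSet f := by
  have : ¬ Function.Injective (fun i : Fin (n + 1) => f^[i] x) := by
    intro hinj
    have := Fintype.card_le_of_injective _ hinj
    simp at this
  rw [Function.not_injective_iff] at this
  obtain ⟨i, j, hij, hne⟩ := this
  rcases Nat.lt_or_ge i.val j.val with h | h
  · refine ⟨i, mem_perSet.mpr ⟨j.val - i.val, by omega, ?_⟩⟩
    rw [← Function.iterate_add_apply, Nat.sub_add_cancel (le_of_lt h)]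
    exact hij.symm
  · have h' : j.val < i.val := by
      rcases Nat.lt_or_ge j.val i.val with h' | h'
      · exact h'
      · exact absurd (Fin.ext (le_antisymm h h')).symm hne
    refine ⟨j, mem_perSet.mpr ⟨i.val - j.val, by omega, ?_⟩⟩
    rw [← Function.iterate_add_apply, Nat.sub_add_cancel (le_of_lt h')]
    exact hij

lemma perSet_image {f : Fin n → Fin n} : (perSet f).image f = perSet f := by
  apply Finset.eq_of_subset_of_card_le
  · intro y hy
    obtain ⟨x, hx, rfl⟩ := Finset.mem_image.mp hy
    exact perSet_mapsTo hx
  · rw [Finset.card_image_of_injOn (fun a ha b hb => perSet_injOn ha hb)]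

end Cayley

namespace Cayley

variable {n : ℕ} {p : Fin n → Fin n} {r : Fin n}

lemma iterate_eq_root_iff (hp : Cond p r) {v : Fin n} {i : ℕ} :
    p^[i] v = r ↔ depth hp v ≤ i := by
  constructor
  · exact fun h => Nat.find_le h
  · exact fun h => hp.iterate_ge (depth_spec hp v) h

noncomputable def spineList (hp : Cond p r) (s : Fin n) : List (Fin n) :=
  (List.range (depth hp s + 1)).map (fun i => p^[i] s)

lemma length_spineList (hp : Cond p r) (s : Fin n) :
    (spineList hp s).length = depth hp s + 1 := by simp [spineList]

lemma getElem_spineList (hp : Cond p r) (s : Fin n) {i : ℕ}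
    (h : i < (spineList hp s).length) : (spineList hp s)[i] = p^[i] s := by
  have h' : i < (List.range (depth hp s + 1)).length := by
    simpa [spineList] using h
  simp only [spineList, List.getElem_map, List.getElem_range]

lemma mem_spineList (hp : Cond p r) {s x : Fin n} :
    x ∈ spineList hp s ↔ ∃ i, i ≤ depth hp s ∧ p^[i] s = x := by
  simp only [spineList, List.mem_map, List.mem_range]
  constructor
  · rintro ⟨i, hi, rfl⟩; exact ⟨i, by omega, rfl⟩
  · rintro ⟨i, hi, rfl⟩; exact ⟨i, by omega, rfl⟩

lemma nodup_spineList (hp : Cond p r) (s : Fin n) : (spineList hp s).Nodup := by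
  rw [spineList, List.nodup_map_iff_inj_on List.nodup_range]
  intro i hi j hj hij
  rw [List.mem_range] at hi hj
  by_contra hne
  -- wlog i < j
  wlog hlt : i < j generalizing i j
  · exact this j hj i hi hij.symm (Ne.symm hne) (by omega)
  have hper : p^[j - i] (p^[i] s) = p^[i] s := by
    rw [← Function.iterate_add_apply, Nat.sub_add_cancel (le_of_lt hlt)]
    exact hij.symm
  have := hp.eq_root_of_periodic (by omega : 0 < j - i) hper
  rw [iterate_eq_root_iff hp] at this
  omega

lemma spineList_getLast (hp : Cond p r) (s : Fin n) {d : Fin n} :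
    (spineList hp s).getD (depth hp s) d = r := by
  rw [List.getD_eq_getElem _ _ (by rw [length_spineList]; omega),
    getElem_spineList hp s, depth_spec hp s]

lemma spineList_head (hp : Cond p r) (s : Fin n) {d : Fin n} :
    (spineList hp s).getD 0 d = s := by
  rw [List.getD_eq_getElem _ _ (by rw [length_spineList]; omega), getElem_spineList hp s]
  simp

end Cayley

namespace Cayley

variable {n : ℕ} {p : Fin n → Fin n} {r : Fin n}

noncomputable def spineSorted (hp : Cond p r) (s : Fin n) : List (Fin n) :=
  ((spineList hp s).toFinset).sort (· ≤ ·)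

noncomputable def psiFun (hp : Cond p r) (s : Fin n) : Fin n → Fin n := fun x =>
  if x ∈ spineSorted hp s then (spineList hp s).getD ((spineSorted hp s).idxOf x) x else p x

lemma length_spineSorted (hp : Cond p r) (s : Fin n) :
    (spineSorted hp s).length = (spineList hp s).length := by
  rw [spineSorted, Finset.length_sort, List.toFinset_card_of_nodup (nodup_spineList hp s)]

lemma mem_spineSorted (hp : Cond p r) {s x : Fin n} :
    x ∈ spineSorted hp s ↔ x ∈ spineList hp s := by
  rw [spineSorted, Finset.mem_sort, List.mem_toFinset]

lemma nodup_spineSorted (hp : Cond p r) (s : Fin n) : (spineSorted hp s).Nodup :=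
  Finset.sort_nodup _ _

lemma psiFun_getElem (hp : Cond p r) (s : Fin n) {i : ℕ} (h : i < (spineSorted hp s).length) :
    psiFun hp s ((spineSorted hp s)[i]) = (spineList hp s)[i]'(by
      rwa [← length_spineSorted hp s]) := by
  rw [psiFun]
  rw [if_pos (List.getElem_mem h)]
  rw [List.Nodup.idxOf_getElem (nodup_spineSorted hp s) i h]
  exact List.getD_eq_getElem _ _ _

lemma psiFun_of_not_mem (hp : Cond p r) {s x : Fin n} (hx : x ∉ spineList hp s) :
    psiFun hp s x = p x := by
  rw [psiFun, if_neg (fun hc => hx ((mem_spineSorted hp).mp hc))]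

lemma exists_spineSorted_index (hp : Cond p r) {s x : Fin n} (hx : x ∈ spineList hp s) :
    ∃ i, ∃ h : i < (spineSorted hp s).length, (spineSorted hp s)[i] = x := by
  have hx' : x ∈ spineSorted hp s := (mem_spineSorted hp).mpr hx
  exact ⟨_, List.idxOf_lt_length_iff.mpr hx', List.getElem_idxOf _⟩

lemma psiFun_mapsTo (hp : Cond p r) {s x : Fin n} (hx : x ∈ spineList hp s) :
    psiFun hp s x ∈ spineList hp s := by
  obtain ⟨i, h, rfl⟩ := exists_spineSorted_index hp hx
  rw [psiFun_getElem hp s h]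
  exact List.getElem_mem _

lemma psiFun_injOn (hp : Cond p r) {s x y : Fin n} (hx : x ∈ spineList hp s)
    (hy : y ∈ spineList hp s) (hxy : psiFun hp s x = psiFun hp s y) : x = y := by
  obtain ⟨i, hi, rfl⟩ := exists_spineSorted_index hp hx
  obtain ⟨j, hj, rfl⟩ := exists_spineSorted_index hp hy
  rw [psiFun_getElem hp s hi, psiFun_getElem hp s hj] at hxy
  have : i = j := (List.Nodup.getElem_inj_iff (nodup_spineList hp s)).mp hxy
  subst this
  rfl

-- generic periodicity from injective self-maps of finite sets
lemma mem_perSet_of_mapsTo {f : Fin n → Fin n} {S : Finset (Fin n)}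
    (hmaps : ∀ x ∈ S, f x ∈ S) (hinj : ∀ x ∈ S, ∀ y ∈ S, f x = f y → x = y)
    {x : Fin n} (hx : x ∈ S) : x ∈ perSet f := by
  have hiter : ∀ i, f^[i] x ∈ S := by
    intro i
    induction i with
    | zero => exact hx
    | succ i ih => rw [Function.iterate_succ_apply']; exact hmaps _ ih
  have hcancel : ∀ i j, i ≤ j → f^[i] x = f^[j] x → f^[j - i] x = x := by
    intro i
    induction i with
    | zero => intro j _ h; simpa using h.symm
    | succ i ih =>
      intro j hij h
      obtain ⟨j', rfl⟩ : ∃ j', j = j' + 1 := ⟨j - 1, by omega⟩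
      rw [Function.iterate_succ_apply', Function.iterate_succ_apply'] at h
      have := hinj _ (hiter i) _ (hiter j') h
      have h2 := ih j' (by omega) this
      have : j' + 1 - (i + 1) = j' - i := by omega
      rwa [this]
  have : ¬ Function.Injective (fun i : Fin (n + 1) => f^[i] x) := by
    intro hinj'
    have := Fintype.card_le_of_injective _ hinj'
    simp at this
  rw [Function.not_injective_iff] at this
  obtain ⟨i, j, hij, hne⟩ := this
  rcases Nat.lt_or_ge i.val j.val with h | h
  · exact mem_perSet.mpr ⟨j.val - i.val, by omega, hcancel i j (le_of_lt h) hij⟩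
  · have h' : j.val < i.val := by
      rcases Nat.lt_or_ge j.val i.val with h' | h'
      · exact h'
      · exact absurd (Fin.ext (le_antisymm h h')).symm hne
    exact mem_perSet.mpr ⟨i.val - j.val, by omega, hcancel j i (le_of_lt h') hij.symm⟩

lemma perSet_psiFun (hp : Cond p r) (s : Fin n) :
    perSet (psiFun hp s) = (spineList hp s).toFinset := by
  ext x
  simp only [List.mem_toFinset]
  constructor
  · intro hx
    rw [mem_perSet] at hx
    obtain ⟨k, hk, hkx⟩ := hx
    by_contra hxL
    -- iterates agree with p while outside L
    have Hagree : ∀ j, (∀ t, t < j → (psiFun hp s)^[t] x ∉ spineList hp s) →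
        (psiFun hp s)^[j] x = p^[j] x := by
      intro j
      induction j with
      | zero => intro _; rfl
      | succ j ih =>
        intro hall
        have hj := ih (fun t ht => hall t (by omega))
        rw [Function.iterate_succ_apply', Function.iterate_succ_apply', ← hj,
          psiFun_of_not_mem hp (hall j (by omega)), hj]
    -- some iterate lands in L
    have Henter : ∃ m, (psiFun hp s)^[m] x ∈ spineList hp s := by
      by_contra hc
      push_neg at hc
      have h1 : (psiFun hp s)^[depth hp x] x = p^[depth hp x] x :=
        Hagree _ (fun t _ => hc t)
      have h2 := depth_spec hp x
      have : r ∈ spineList hp s := by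
        rw [mem_spineList hp]
        exact ⟨depth hp s, le_refl _, depth_spec hp s⟩
      exact hc (depth hp x) (by rw [h1, h2]; exact this)
    obtain ⟨m, hm⟩ := Henter
    -- once in, always in
    have Hstay : ∀ t, (psiFun hp s)^[m + t] x ∈ spineList hp s := by
      intro t
      induction t with
      | zero => simpa using hm
      | succ t ih =>
        rw [← Nat.add_assoc, Function.iterate_succ_apply']
        exact psiFun_mapsTo hp ih
    -- periodicity brings x back
    have hmult : ∀ T, (psiFun hp s)^[k * T] x = x := fun T => iterate_mul_fixed hkx T
    have hT := Hstay (k * (m + 1) - m)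
    have hle : m + 1 ≤ k * (m + 1) := Nat.le_mul_of_pos_left _ hk
    rw [show m + (k * (m + 1) - m) = k * (m + 1) by omega, hmult (m + 1)] at hT
    exact hxL hT
  · intro hx
    exact mem_perSet_of_mapsTo (fun y hy => List.mem_toFinset.mpr (psiFun_mapsTo hp (List.mem_toFinset.mp hy)))
      (fun y hy z hz => psiFun_injOn hp (List.mem_toFinset.mp hy) (List.mem_toFinset.mp hz))
      (List.mem_toFinset.mpr hx)

end Cayley

namespace Cayley

variable {n : ℕ}

lemma perSet_nonempty (hn : 0 < n) (f : Fin n → Fin n) : (perSet f).Nonempty := by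
  obtain ⟨m, hm⟩ := exists_iterate_mem_perSet f ⟨0, hn⟩
  exact ⟨_, hm⟩

noncomputable def phiList (f : Fin n → Fin n) : List (Fin n) :=
  ((perSet f).sort (· ≤ ·)).map f

noncomputable def phiFun (f : Fin n → Fin n) : Fin n → Fin n := fun x =>
  if x ∈ phiList f then (phiList f).getD ((phiList f).idxOf x + 1) x else f x

lemma toFinset_phiList (f : Fin n → Fin n) : (phiList f).toFinset = perSet f := by
  ext x
  simp only [List.mem_toFinset, phiList, List.mem_map, Finset.mem_sort]
  constructor
  · rintro ⟨a, ha, rfl⟩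
    exact perSet_mapsTo ha
  · intro hx
    have hx' : x ∈ (perSet f).image f := by rw [perSet_image]; exact hx
    obtain ⟨a, ha, rfl⟩ := Finset.mem_image.mp hx'
    exact ⟨a, ha, rfl⟩

lemma mem_phiList {f : Fin n → Fin n} {x : Fin n} : x ∈ phiList f ↔ x ∈ perSet f := by
  rw [← toFinset_phiList f, List.mem_toFinset]

lemma length_phiList (f : Fin n → Fin n) : (phiList f).length = (perSet f).card := by
  rw [phiList, List.length_map, Finset.length_sort]

lemma nodup_phiList (f : Fin n → Fin n) : (phiList f).Nodup := by
  refine List.Nodup.map_on ?_ (Finset.sort_nodup _ _)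
  intro x hx y hy hxy
  rw [Finset.mem_sort] at hx hy
  exact perSet_injOn hx hy hxy

lemma length_phiList_pos (hn : 0 < n) (f : Fin n → Fin n) : 0 < (phiList f).length := by
  rw [length_phiList]
  exact Finset.card_pos.mpr (perSet_nonempty hn f)

lemma phiFun_getElem (f : Fin n → Fin n) {i : ℕ} (h : i + 1 < (phiList f).length) :
    phiFun f ((phiList f)[i]'(by omega)) = (phiList f)[i + 1] := by
  rw [phiFun, if_pos (List.getElem_mem _),
    List.Nodup.idxOf_getElem (nodup_phiList f) i (by omega)]
  exact List.getD_eq_getElem _ _ _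

lemma phiFun_last (f : Fin n → Fin n) {i : ℕ} (h : i < (phiList f).length)
    (hi : i + 1 = (phiList f).length) :
    phiFun f ((phiList f)[i]) = (phiList f)[i] := by
  rw [phiFun, if_pos (List.getElem_mem _), List.Nodup.idxOf_getElem (nodup_phiList f) i h, hi]
  exact List.getD_eq_default _ _ (le_refl _)

lemma phiFun_of_not_mem {f : Fin n → Fin n} {x : Fin n} (hx : x ∉ phiList f) :
    phiFun f x = f x := if_neg hx

lemma phiFun_iterate (f : Fin n → Fin n) {i t : ℕ} (h : i + t < (phiList f).length) :
    (phiFun f)^[t] ((phiList f)[i]'(by omega)) = (phiList f)[i + t] := by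
  induction t generalizing i with
  | zero => simp
  | succ t ih =>
    rw [Function.iterate_succ_apply, phiFun_getElem f (by omega)]
    have := ih (i := i + 1) (by omega)
    rw [this]
    congr 1
    omega

/-- the root: last entry of the spine -/
noncomputable def phiRoot (hn : 0 < n) (f : Fin n → Fin n) : Fin n :=
  (phiList f)[(phiList f).length - 1]'(by have := length_phiList_pos hn f; omega)

/-- the second mark: first entry of the spine -/
noncomputable def phiStart (hn : 0 < n) (f : Fin n → Fin n) : Fin n :=
  (phiList f)[0]'(length_phiList_pos hn f)

lemma cond_phiFun (hn : 0 < n) (f : Fin n → Fin n) : Cond (phiFun f) (phiRoot hn f) := by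
  have hlen := length_phiList_pos hn f
  constructor
  · exact phiFun_last f _ (by omega)
  · -- every spine element reaches the root
    have hspine : ∀ i (h : i < (phiList f).length),
        ∃ j, (phiFun f)^[j] ((phiList f)[i]) = phiRoot hn f := by
      intro i h
      refine ⟨(phiList f).length - 1 - i, ?_⟩
      rw [phiFun_iterate f (by omega)]
      rw [phiRoot]
      congr 1
      omega
    intro v
    -- strong induction on entry time into perSet f
    have hex : ∃ m, f^[m] v ∈ perSet f := exists_iterate_mem_perSet f v
    generalize he : Nat.find hex = e
    induction e using Nat.strong_induction_on generalizing v with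
    | _ e ih =>
      by_cases hv : v ∈ phiList f
      · obtain ⟨i, hi, rfl⟩ : ∃ i, ∃ h : i < (phiList f).length, (phiList f)[i] = v :=
          ⟨_, List.idxOf_lt_length_iff.mpr hv, List.getElem_idxOf _⟩
        exact hspine i hi
      · have hv' : v ∉ perSet f := fun hc => hv (mem_phiList.mpr hc)
        have hfind : Nat.find hex ≠ 0 := by
          intro hc
          have := Nat.find_spec hex
          rw [hc] at this
          exact hv' this
        have hex2 : ∃ m, f^[m] (f v) ∈ perSet f := by
          refine ⟨Nat.find hex - 1, ?_⟩
          rw [← Function.iterate_succ_apply, Nat.succ_eq_add_one, Nat.sub_add_cancel (by omega)]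
          exact Nat.find_spec hex
        have hlt : Nat.find hex2 < e := by
          have h1 : Nat.find hex2 ≤ Nat.find hex - 1 := Nat.find_le (by
            rw [← Function.iterate_succ_apply, Nat.succ_eq_add_one,
              Nat.sub_add_cancel (by omega)]
            exact Nat.find_spec hex)
          omega
        obtain ⟨j, hj⟩ := ih _ hlt (f v) hex2 rfl
        refine ⟨j + 1, ?_⟩
        rw [Function.iterate_succ_apply, phiFun_of_not_mem hv, hj]

end Cayley

namespace Cayley

variable {n : ℕ} {p : Fin n → Fin n} {r : Fin n}

-- getD helpers
lemma getD_indexOf {l : List (Fin n)} {x : Fin n} (h : x ∈ l) (d : Fin n) :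
    l.getD (l.idxOf x) d = x := by
  rw [List.getD_eq_getElem _ _ (List.idxOf_lt_length_iff.mpr h)]
  exact List.getElem_idxOf _

lemma getD_inj {l : List (Fin n)} (hl : l.Nodup) {i j : ℕ} (hi : i < l.length)
    (hj : j < l.length) {d : Fin n} (h : l.getD i d = l.getD j d) : i = j := by
  rw [List.getD_eq_getElem _ _ hi, List.getD_eq_getElem _ _ hj] at h
  exact (List.Nodup.getElem_inj_iff hl).mp h

lemma phiFun_getD {f : Fin n → Fin n} {i : ℕ} (h : i + 1 < (phiList f).length) (d : Fin n) :
    phiFun f ((phiList f).getD i d) = (phiList f).getD (i + 1) d := by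
  rw [List.getD_eq_getElem _ _ (by omega), List.getD_eq_getElem _ _ h]
  exact phiFun_getElem f h

lemma phiFun_getD_last {f : Fin n → Fin n} (h : 0 < (phiList f).length) (d : Fin n) :
    phiFun f ((phiList f).getD ((phiList f).length - 1) d) =
      (phiList f).getD ((phiList f).length - 1) d := by
  rw [List.getD_eq_getElem _ _ (by omega)]
  exact phiFun_last f (by omega) (by omega)

lemma phiFun_iterate_getD {f : Fin n → Fin n} {i t : ℕ} (h : i + t < (phiList f).length)
    (d : Fin n) :
    (phiFun f)^[t] ((phiList f).getD i d) = (phiList f).getD (i + t) d := by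
  rw [List.getD_eq_getElem _ _ (by omega), List.getD_eq_getElem _ _ h]
  exact phiFun_iterate f h

lemma psiFun_getD (hp : Cond p r) (s : Fin n) {i : ℕ}
    (h : i < (spineSorted hp s).length) (d : Fin n) :
    psiFun hp s ((spineSorted hp s).getD i d) = (spineList hp s).getD i d := by
  rw [List.getD_eq_getElem _ _ h,
    List.getD_eq_getElem _ _ (by rw [← length_spineSorted hp s]; exact h)]
  exact psiFun_getElem hp s h

lemma getD_spineList (hp : Cond p r) (s : Fin n) {i : ℕ}
    (h : i < (spineList hp s).length) (d : Fin n) :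
    (spineList hp s).getD i d = p^[i] s := by
  rw [List.getD_eq_getElem _ _ h]
  exact getElem_spineList hp s h

lemma getD_phiList {f : Fin n → Fin n} {i : ℕ} (h : i < (phiList f).length) (d : Fin n) :
    (phiList f).getD i d = f (((perSet f).sort (· ≤ ·)).getD i d) := by
  have h' : i < ((perSet f).sort (· ≤ ·)).length := by
    rw [phiList, List.length_map] at h
    exact h
  rw [List.getD_eq_getElem _ _ h, List.getD_eq_getElem _ _ h']
  simp only [phiList, List.getElem_map]

end Cayley

namespace Cayley

variable {n : ℕ} {p : Fin n → Fin n} {r : Fin n}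

lemma phiStart_eq (hn : 0 < n) (f : Fin n → Fin n) (d : Fin n) :
    phiStart hn f = (phiList f).getD 0 d := by
  rw [List.getD_eq_getElem _ _ (length_phiList_pos hn f)]
  rfl

lemma phiRoot_eq (hn : 0 < n) (f : Fin n → Fin n) (d : Fin n) :
    phiRoot hn f = (phiList f).getD ((phiList f).length - 1) d := by
  rw [List.getD_eq_getElem _ _ (by have := length_phiList_pos hn f; omega)]
  rfl

lemma depth_phiStart (hn : 0 < n) (f : Fin n → Fin n) :
    depth (cond_phiFun hn f) (phiStart hn f) = (phiList f).length - 1 := by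
  have hlen := length_phiList_pos hn f
  set d0 : Fin n := ⟨0, hn⟩
  have hroot : (phiFun f)^[(phiList f).length - 1] (phiStart hn f) = phiRoot hn f := by
    rw [phiStart_eq hn f d0, phiRoot_eq hn f d0, phiFun_iterate_getD (by omega) d0,
      Nat.zero_add]
  have h1 : depth (cond_phiFun hn f) (phiStart hn f) ≤ (phiList f).length - 1 :=
    (iterate_eq_root_iff (cond_phiFun hn f)).mp hroot
  have h2 := depth_spec (cond_phiFun hn f) (phiStart hn f)
  set d := depth (cond_phiFun hn f) (phiStart hn f) with hd
  have h3 : (phiFun f)^[d] (phiStart hn f) = (phiList f).getD d d0 := by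
    rw [phiStart_eq hn f d0, phiFun_iterate_getD (by omega) d0, Nat.zero_add]
  rw [h3, phiRoot_eq hn f d0] at h2
  have := getD_inj (nodup_phiList f) (by omega) (by omega) h2
  omega

lemma spineList_phi (hn : 0 < n) (f : Fin n → Fin n) :
    spineList (cond_phiFun hn f) (phiStart hn f) = phiList f := by
  have hlen := length_phiList_pos hn f
  have hlen2 : (spineList (cond_phiFun hn f) (phiStart hn f)).length = (phiList f).length := by
    rw [length_spineList, depth_phiStart hn f]
    omega
  apply List.ext_getElem hlen2
  intro i h1 h2
  rw [getElem_spineList]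
  rw [← List.getD_eq_getElem (phiList f) ⟨0, hn⟩ h2]
  rw [show (phiFun f)^[i] (phiStart hn f) = (phiList f).getD (0 + i) ⟨0, hn⟩ by
    rw [phiStart_eq hn f ⟨0, hn⟩]; exact phiFun_iterate_getD (by omega) _]
  congr 1
  omega

/-- Round trip A : `Ψ (Φ f) = f`. -/
lemma psi_phi (hn : 0 < n) (f : Fin n → Fin n) :
    psiFun (cond_phiFun hn f) (phiStart hn f) = f := by
  funext x
  have hss : spineSorted (cond_phiFun hn f) (phiStart hn f) = (perSet f).sort (· ≤ ·) := by
    rw [spineSorted, spineList_phi hn f, toFinset_phiList]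
  by_cases hx : x ∈ perSet f
  · set W := spineSorted (cond_phiFun hn f) (phiStart hn f) with hW
    have hx' : x ∈ W := by rw [hss, Finset.mem_sort]; exact hx
    set i := W.idxOf x with hi
    have hiW : i < W.length := List.idxOf_lt_length_iff.mpr hx'
    have hWx : W.getD i x = x := getD_indexOf hx' x
    have h1 := psiFun_getD (cond_phiFun hn f) (phiStart hn f) hiW x
    rw [hWx] at h1
    rw [h1, spineList_phi hn f, getD_phiList (by
      rw [phiList, List.length_map]
      rw [hss] at hiW
      rwa [Finset.length_sort] at hiW ⊢) x]
    rw [← hss, hWx]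
  · have hx1 : x ∉ spineList (cond_phiFun hn f) (phiStart hn f) := by
      rw [spineList_phi hn f, mem_phiList]; exact hx
    rw [psiFun_of_not_mem _ hx1, phiFun_of_not_mem (by rwa [mem_phiList])]

end Cayley

namespace Cayley

variable {n : ℕ} {p : Fin n → Fin n} {r : Fin n}

lemma sort_perSet_psiFun (hp : Cond p r) (s : Fin n) :
    (perSet (psiFun hp s)).sort (· ≤ ·) = spineSorted hp s := by
  rw [perSet_psiFun hp s, spineSorted]

lemma phiList_psiFun (hp : Cond p r) (s : Fin n) :
    phiList (psiFun hp s) = spineList hp s := by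
  rw [phiList, sort_perSet_psiFun hp s]
  apply List.ext_getElem
  · rw [List.length_map, length_spineSorted]
  · intro i h1 h2
    rw [List.getElem_map]
    exact psiFun_getElem hp s (by rwa [List.length_map] at h1)

lemma phiStart_psiFun (hn : 0 < n) (hp : Cond p r) (s : Fin n) :
    phiStart hn (psiFun hp s) = s := by
  rw [phiStart_eq hn _ s, phiList_psiFun hp s,
    getD_spineList hp s (by rw [length_spineList]; omega) s]
  rfl

lemma phiRoot_psiFun (hn : 0 < n) (hp : Cond p r) (s : Fin n) :
    phiRoot hn (psiFun hp s) = r := by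
  rw [phiRoot_eq hn _ s, phiList_psiFun hp s]
  have hl : (spineList hp s).length - 1 = depth hp s := by rw [length_spineList]; omega
  rw [hl, getD_spineList hp s (by rw [length_spineList]; omega) s]
  exact depth_spec hp s

/-- Round trip B : `Φ (Ψ t) = t` (function component). -/
lemma phiFun_psiFun (hp : Cond p r) (s : Fin n) : phiFun (psiFun hp s) = p := by
  funext x
  by_cases hx : x ∈ spineList hp s
  · set L := spineList hp s with hL
    set i := L.idxOf x with hi
    have hiL : i < L.length := List.idxOf_lt_length_iff.mpr hx
    have hLx : L.getD i x = x := getD_indexOf hx x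
    have hlen : L.length = depth hp s + 1 := length_spineList hp s
    rcases Nat.lt_or_ge (i + 1) L.length with hlt | hge
    · have h1 := phiFun_getD (f := psiFun hp s)
        (by rw [phiList_psiFun hp s, ← hL]; exact hlt) x
      rw [phiList_psiFun hp s, ← hL, hLx] at h1
      rw [h1, getD_spineList hp s (by rw [← hL]; exact hlt) x,
        Function.iterate_succ_apply']
      congr 1
      rw [← getD_spineList hp s (by rw [← hL]; omega) x, ← hL, hLx]
    · -- x is the last entry, i.e. the root
      have hieq : i = L.length - 1 := by omega
      have hxr : x = r := by
        rw [← hLx, hieq, hL, length_spineList]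
        have : depth hp s + 1 - 1 = depth hp s := by omega
        rw [this, getD_spineList hp s (by rw [length_spineList]; omega) x]
        exact depth_spec hp s
      have h1 := phiFun_getD_last (f := psiFun hp s)
        (by rw [phiList_psiFun hp s, ← hL]; omega) x
      rw [phiList_psiFun hp s, ← hL, ← hieq, hLx] at h1
      rw [h1, hxr, hp.1]
  · have hx' : x ∉ phiList (psiFun hp s) := by rw [phiList_psiFun hp s]; exact hx
    rw [phiFun_of_not_mem hx', psiFun_of_not_mem hp hx]

/-- Joyal's bijection. -/
noncomputable def joyalEquiv (hn : 0 < n) :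
    (Fin n → Fin n) ≃ {t : (Fin n → Fin n) × Fin n × Fin n // Cond t.1 t.2.1} where
  toFun f := ⟨(phiFun f, phiRoot hn f, phiStart hn f), cond_phiFun hn f⟩
  invFun t := psiFun t.2 t.1.2.2
  left_inv f := psi_phi hn f
  right_inv t := by
    obtain ⟨⟨p, r, s⟩, hp⟩ := t
    simp only [Subtype.mk.injEq, Prod.mk.injEq]
    exact ⟨phiFun_psiFun hp s, phiRoot_psiFun hn hp s, phiStart_psiFun hn hp s⟩

/-- Regrouping triples as pairs with an extra mark. -/
def tripleEquiv (n : ℕ) :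
    {t : (Fin n → Fin n) × Fin n × Fin n // Cond t.1 t.2.1} ≃
      {q : (Fin n → Fin n) × Fin n // Cond q.1 q.2} × Fin n where
  toFun t := (⟨(t.1.1, t.1.2.1), t.2⟩, t.1.2.2)
  invFun q := ⟨(q.1.1.1, q.1.1.2, q.2), q.1.2⟩
  left_inv t := rfl
  right_inv q := rfl

end Cayley

/-- **Cayley's formula for rooted trees.** For every `n ≥ 1`, the number of
rooted trees on the vertex set `Fin n` — i.e. pairs `(T, r)` of a tree `T` (a connected,
acyclic simple graph) on `Fin n` together with a distinguished root vertex `r` — is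
`n ^ (n − 1)`. -/
theorem card_rooted_trees (n : ℕ) (hn : 1 ≤ n) :
    Nat.card {p : SimpleGraph (Fin n) × Fin n // p.1.IsTree} = n ^ (n - 1) := by
  have h1 : Nat.card {p : SimpleGraph (Fin n) × Fin n // p.1.IsTree} =
      Nat.card {q : (Fin n → Fin n) × Fin n // Cayley.Cond q.1 q.2} :=
    (Nat.card_congr (Cayley.rootedTreeEquiv n)).symm
  have h2 : Nat.card {q : (Fin n → Fin n) × Fin n // Cayley.Cond q.1 q.2} * n = n ^ n := by
    have e := (Cayley.joyalEquiv (n := n) (by omega)).trans (Cayley.tripleEquiv n)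
    have := Nat.card_congr e
    rw [Nat.card_prod] at this
    simp only [Nat.card_eq_fintype_card, Fintype.card_fun, Fintype.card_fin] at this
    exact this.symm
  have h3 : n ^ (n - 1) * n = n ^ n := by
    rw [← pow_succ]
    congr 1
    omega
  rw [h1]
  have hn' : 0 < n := hn
  exact Nat.eq_of_mul_eq_mul_right hn' (by rw [h2, ← h3])
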